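/- If d is a symmetric N×N matrix of strict negative type (x^T d x < 0 for nonzero x with 1^T x = 0) and N ≥ 2, then d has exactly one positive eigenvalue and N−1 negative eigenvalues; in particular d is invertible. -/

import Mathlib

open Matrix BigOperators

/-- A symmetric strict negative type matrix with `N ≥ 2` has exactly one positive eigenvalue
and `N − 1` negative eigenvalues; in particular it is invertible. -/
theorem stmt14 {N : ℕ} (hN : 2 ≤ N) (d : Matrix (Fin N) (Fin N) ℝ)
    (hd : d.IsHermitian) (hdiag : ∀ i, d i i = 0)
    (hpos : ∀ i j, i ≠ j → 0 < d i j)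
    (hSNT : ∀ x : Fin N → ℝ, x ≠ 0 → ∑ i, x i = 0 → x ⬝ᵥ d.mulVec x < 0) :
    (Finset.univ.filter fun i => 0 < hd.eigenvalues i).card = 1 ∧
    (Finset.univ.filter fun i => hd.eigenvalues i < 0).card = N - 1 ∧
    IsUnit d := by
  set μ := hd.eigenvalues with hμ
  set v : Fin N → (Fin N → ℝ) := fun i => ⇑(hd.eigenvectorBasis i) with hv
  -- orthonormality in dot product form
  have horth : ∀ i j : Fin N, v i ⬝ᵥ v j = if i = j then 1 else 0 := by
    intro i j
    have h := orthonormal_iff_ite.mp hd.eigenvectorBasis.orthonormal i j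
    have h2 : (inner ℝ (hd.eigenvectorBasis i) (hd.eigenvectorBasis j) : ℝ)
        = v i ⬝ᵥ v j := by
      simp [PiLp.inner_apply, dotProduct, hv, mul_comm]
    rw [h2] at h
    simpa using h
  have hmv : ∀ i : Fin N, d.mulVec (v i) = μ i • v i := fun i =>
    hd.mulVec_eigenvectorBasis i
  -- the quadratic form on a combination of two eigenvectors
  have hquad : ∀ (a b : Fin N), a ≠ b → ∀ α β : ℝ,
      (α • v a + β • v b) ⬝ᵥ d.mulVec (α • v a + β • v b)
        = α ^ 2 * μ a + β ^ 2 * μ b := by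
    intro a b hab α β
    rw [mulVec_add, mulVec_smul, mulVec_smul, hmv, hmv]
    simp only [add_dotProduct, dotProduct_add, smul_dotProduct, dotProduct_smul,
      smul_eq_mul, horth, if_pos rfl, if_neg hab, if_neg (Ne.symm hab), if_true]
    ring
  -- each eigenvector is nonzero
  have hvne : ∀ i : Fin N, v i ≠ 0 := by
    intro i hvi
    have := horth i i
    rw [hvi] at this
    simp at this
  -- Step 1: at most one eigenvalue is ≥ 0
  have step1 : ∀ a b : Fin N, a ≠ b → 0 ≤ μ a → 0 ≤ μ b → False := by
    intro a b hab ha hb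
    by_cases hsa : ∑ i, v a i = 0
    · have := hSNT (v a) (hvne a) hsa
      have h1 : v a ⬝ᵥ d.mulVec (v a) = μ a := by
        rw [hmv]; simp only [dotProduct_smul, smul_eq_mul]
        rw [show v a ⬝ᵥ v a = 1 by simpa using horth a a]; ring
      rw [h1] at this; linarith
    · by_cases hsb : ∑ i, v b i = 0
      · have := hSNT (v b) (hvne b) hsb
        have h1 : v b ⬝ᵥ d.mulVec (v b) = μ b := by
          rw [hmv]; simp only [dotProduct_smul, smul_eq_mul]
          rw [show v b ⬝ᵥ v b = 1 by simpa using horth b b]; ring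
        rw [h1] at this; linarith
      · set α := ∑ i, v b i with hα
        set β := -(∑ i, v a i) with hβ
        set x := α • v a + β • v b with hx
        have hxne : x ≠ 0 := by
          intro h0
          have h1 : x ⬝ᵥ v a = α := by
            simp only [hx, add_dotProduct, smul_dotProduct, smul_eq_mul]
            rw [show v a ⬝ᵥ v a = 1 by simpa using horth a a,
              show v b ⬝ᵥ v a = 0 by simpa [Ne.symm hab] using horth b a]
            ring
          rw [h0] at h1
          simp only [zero_dotProduct] at h1
          exact hsb h1.symm
        have hsum : ∑ i, x i = 0 := by
          simp only [hx, Pi.add_apply, Pi.smul_apply, smul_eq_mul, Finset.sum_add_distrib,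
            ← Finset.mul_sum, hα, hβ]
          ring
        have := hSNT x hxne hsum
        rw [hx, hquad a b hab] at this
        nlinarith [sq_nonneg α, sq_nonneg β]
  -- trace d = sum of eigenvalues = 0
  have htr : ∑ i, μ i = 0 := by
    have h1 : d.trace = 0 := by
      simp [Matrix.trace, Matrix.diag, hdiag]
    have h2 : d.trace = ∑ i, μ i := by
      conv_lhs => rw [hd.spectral_theorem]
      rw [Unitary.conjStarAlgAut_apply]
      rw [Matrix.trace_mul_cycle]
      rw [show (star (hd.eigenvectorUnitary : Matrix (Fin N) (Fin N) ℝ)) *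
          (hd.eigenvectorUnitary : Matrix (Fin N) (Fin N) ℝ) = 1 from
        Matrix.mem_unitaryGroup_iff'.mp hd.eigenvectorUnitary.2]
      simp [Matrix.trace_diagonal, hμ]
    rw [← h2, h1]
  -- Step 2: there is a positive eigenvalue
  have step2 : ∃ j, 0 < μ j := by
    by_contra h
    push_neg at h
    have hall : ∀ i ∈ Finset.univ, μ i = 0 :=
      (Finset.sum_eq_zero_iff_of_nonpos (fun i _ => h i)).mp htr
    have i0 : Fin N := ⟨0, by omega⟩
    have i1 : Fin N := ⟨1, by omega⟩
    exact step1 ⟨0, by omega⟩ ⟨1, by omega⟩ (by simp [Fin.ext_iff])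
      (le_of_eq (hall _ (Finset.mem_univ _)).symm)
      (le_of_eq (hall _ (Finset.mem_univ _)).symm)
  obtain ⟨j, hj⟩ := step2
  have hneg : ∀ i, i ≠ j → μ i < 0 := by
    intro i hij
    by_contra h
    push_neg at h
    exact step1 i j hij h hj.le
  have hfpos : (Finset.univ.filter fun i => 0 < μ i) = {j} := by
    ext i
    simp only [Finset.mem_filter, Finset.mem_univ, true_and, Finset.mem_singleton]
    constructor
    · intro hi
      by_contra hij
      exact absurd hi (not_lt.mpr (hneg i hij).le)
    · rintro rfl; exact hj
  have hfneg : (Finset.univ.filter fun i => μ i < 0) = Finset.univ \ {j} := by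
    ext i
    simp only [Finset.mem_filter, Finset.mem_univ, true_and, Finset.mem_sdiff,
      Finset.mem_singleton]
    constructor
    · intro hi h
      rw [h] at hi; linarith
    · intro hij; exact hneg i hij
  refine ⟨by rw [hfpos]; simp, by rw [hfneg]; simp [Finset.card_sdiff_of_subset], ?_⟩
  -- invertibility
  rw [Matrix.isUnit_iff_isUnit_det, isUnit_iff_ne_zero]
  rw [hd.det_eq_prod_eigenvalues]
  refine Finset.prod_ne_zero_iff.mpr fun i _ => ?_
  by_cases hij : i = j
  · subst hij; exact ne_of_gt hj
  · exact ne_of_lt (hneg i hij)
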